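/- Bollobás's inequality: if (A₁,B₁),…,(A_t,B_t) are pairs of finite sets with A_i ∩ B_j = ∅ if and only if i = j, then Σ_{j=1}^t 1 / C(|A_j|+|B_j|, |A_j|) ≤ 1. -/

import Mathlib

open Finset

private lemma term_le_one (a b : ℕ) : (1:ℝ) / ((a+b).choose a) ≤ 1 := by
  have h : 0 < (a+b).choose a := Nat.choose_pos (Nat.le_add_right a b)
  rw [div_le_one (by exact_mod_cast h)]
  exact_mod_cast Nat.one_le_iff_ne_zero.mpr h.ne'

private lemma nat_key {a b : ℕ} (hb : 1 ≤ b) :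
    b * (a+b).choose a = (a+b) * (a+b-1).choose a := by
  obtain ⟨c, rfl⟩ := Nat.exists_eq_add_of_le hb
  have h1 : a + (1 + c) - 1 = a + c := by omega
  have h2 : a + (1 + c) = a + c + 1 := by omega
  rw [h1, h2]
  have h3 : (a+c+1).choose a = (a+c+1).choose (c+1) := by
    have := Nat.choose_symm_add (a := a) (b := c+1)
    rw [show a + (c+1) = a + c + 1 from by omega] at this
    exact this
  have h4 : (a+c).choose a = (a+c).choose c := Nat.choose_symm_add
  have h5 := Nat.add_one_mul_choose_eq (a+c) c
  rw [h3, h4]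
  calc (1+c) * (a+c+1).choose (c+1) = (a+c+1).choose (c+1) * (c+1) := by ring
    _ = (a+c).succ * (a+c).choose c := h5.symm
    _ = (a+c+1) * (a+c).choose c := rfl

private lemma boll {α : Type*} [DecidableEq α] {t : ℕ} (A : Fin t → Finset α) :
    ∀ (n : ℕ) (B : Fin t → Finset α) (s : Finset (Fin t)),
    (∀ i ∈ s, A i ∩ B i = ∅) →
    (∀ i ∈ s, ∀ j ∈ s, i ≠ j → (A i ∩ B j).Nonempty) →
    (s.biUnion (fun i => A i ∪ B i)).card ≤ n →
    ∑ j ∈ s, (1:ℝ) / (((A j).card + (B j).card).choose (A j).card) ≤ 1 := by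
  intro n
  induction n with
  | zero =>
    intro B s h1 h2 hcard
    -- ground set empty
    have hY : s.biUnion (fun i => A i ∪ B i) = ∅ := card_eq_zero.mp (Nat.le_zero.mp hcard)
    have hsub : s.card ≤ 1 := by
      by_contra hgt
      push_neg at hgt
      obtain ⟨i, hi, j, hj, hij⟩ := Finset.one_lt_card.mp hgt
      obtain ⟨y, hy⟩ := h2 i hi j hj hij
      have : y ∈ s.biUnion (fun i => A i ∪ B i) :=
        mem_biUnion.mpr ⟨i, hi, mem_union_left _ (mem_inter.mp hy).1⟩
      rw [hY] at this; exact absurd this (notMem_empty y)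
    calc ∑ j ∈ s, (1:ℝ) / (((A j).card + (B j).card).choose (A j).card)
        ≤ ∑ j ∈ s, (1:ℝ) := Finset.sum_le_sum fun j _ => term_le_one _ _
      _ = s.card := by simp
      _ ≤ 1 := by exact_mod_cast hsub
  | succ n ih =>
    intro B s h1 h2 hcard
    by_cases hs : s.card ≤ 1
    · calc ∑ j ∈ s, (1:ℝ) / (((A j).card + (B j).card).choose (A j).card)
          ≤ ∑ j ∈ s, (1:ℝ) := Finset.sum_le_sum fun j _ => term_le_one _ _
        _ = s.card := by simp
        _ ≤ 1 := by exact_mod_cast hs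
    push_neg at hs
    set Y := s.biUnion (fun i => A i ∪ B i) with hYdef
    -- every B i nonempty
    have hBne : ∀ i ∈ s, (B i).Nonempty := by
      intro i hi
      obtain ⟨j, hj, hij⟩ := Finset.exists_mem_ne hs i
      obtain ⟨y, hy⟩ := h2 j hj i hi hij
      exact ⟨y, (mem_inter.mp hy).2⟩
    have hYsub : ∀ i ∈ s, A i ∪ B i ⊆ Y :=
      fun i hi => subset_biUnion_of_mem (fun i => A i ∪ B i) hi
    have hYpos : 0 < Y.card := by
      obtain ⟨i, hi⟩ := Finset.card_pos.mp (by omega : 0 < s.card)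
      obtain ⟨y, hy⟩ := hBne i hi
      exact card_pos.mpr ⟨y, hYsub i hi (mem_union_right _ hy)⟩
    set N := Y.card with hN
    -- per-i identity
    have key : ∀ i ∈ s, ∑ x ∈ Y \ A i,
        (1:ℝ) / (((A i).card + ((B i) \ {x}).card).choose (A i).card)
        = N / (((A i).card + (B i).card).choose (A i).card) := by
      intro i hi
      have hdisj : A i ∩ B i = ∅ := h1 i hi
      have hBsub : B i ⊆ Y \ A i := by
        intro y hy
        refine mem_sdiff.mpr ⟨hYsub i hi (mem_union_right _ hy), fun hA => ?_⟩
        have : y ∈ A i ∩ B i := mem_inter.mpr ⟨hA, hy⟩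
        rw [hdisj] at this; exact notMem_empty y this
      set a := (A i).card
      set b := (B i).card
      have hb : 1 ≤ b := (hBne i hi).card_pos
      rw [← Finset.sum_sdiff hBsub]
      have e1 : ∀ x ∈ (Y \ A i) \ B i,
          (1:ℝ) / ((a + ((B i) \ {x}).card).choose a) = 1 / ((a+b).choose a) := by
        intro x hx
        rw [Finset.sdiff_singleton_eq_erase, Finset.erase_eq_of_notMem (mem_sdiff.mp hx).2]
      have e2 : ∀ x ∈ B i,
          (1:ℝ) / ((a + ((B i) \ {x}).card).choose a) = 1 / ((a+(b-1)).choose a) := by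
        intro x hx
        rw [card_sdiff_of_subset (singleton_subset_iff.mpr hx), card_singleton]
      rw [Finset.sum_congr rfl e1, Finset.sum_congr rfl e2,
        Finset.sum_const, Finset.sum_const]
      have hAY : A i ⊆ Y := (Finset.union_subset_iff.mp (hYsub i hi)).1
      have hcards : ((Y \ A i) \ B i).card = N - a - b := by
        rw [card_sdiff_of_subset hBsub, card_sdiff_of_subset hAY]
      have hab : a + b ≤ N := by
        have := card_le_card (hYsub i hi)
        rwa [card_union_of_disjoint (disjoint_iff_inter_eq_empty.mpr hdisj)] at this
      rw [hcards]
      have hkey := nat_key (a := a) hb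
      have hc1 : (0:ℝ) < (a+b).choose a := by
        exact_mod_cast Nat.choose_pos (Nat.le_add_right a b)
      have hc2 : (0:ℝ) < (a+(b-1)).choose a := by
        exact_mod_cast Nat.choose_pos (Nat.le_add_right a (b-1))
      have hab1 : a + (b-1) = a + b - 1 := by omega
      have hcastkey : (b:ℝ) * ((a+b).choose a) = (a+b) * ((a+(b-1)).choose a) := by
        rw [hab1]; exact_mod_cast hkey
      have hNab : ((N - a - b : ℕ) : ℝ) = (N:ℝ) - a - b := by
        have : N - a - b + (a + b) = N := by omega
        have := congrArg (fun k : ℕ => (k:ℝ)) this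
        push_cast at this
        linarith
      rw [nsmul_eq_mul, nsmul_eq_mul, hNab]
      field_simp
      nlinarith [hcastkey, hc1, hc2]
    -- swap sums
    have fconv : ∀ i ∈ s, ∑ x ∈ Y \ A i,
        (1:ℝ) / (((A i).card + ((B i) \ {x}).card).choose (A i).card)
        = ∑ x ∈ Y, if x ∉ A i then
            (1:ℝ) / (((A i).card + ((B i) \ {x}).card).choose (A i).card) else 0 := by
      intro i hi
      rw [Finset.sdiff_eq_filter, Finset.sum_filter]
    have inner_le : ∀ x ∈ Y,
        (∑ i ∈ s.filter (fun i => x ∉ A i),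
          (1:ℝ) / (((A i).card + ((B i) \ {x}).card).choose (A i).card)) ≤ 1 := by
      intro x hx
      apply ih (fun i => B i \ {x}) (s.filter (fun i => x ∉ A i))
      · intro i hi
        have := h1 i (Finset.mem_filter.mp hi).1
        apply Finset.eq_empty_of_forall_notMem
        intro y hy
        have : y ∈ A i ∩ B i := by
          have hm := mem_inter.mp hy
          exact mem_inter.mpr ⟨hm.1, (mem_sdiff.mp hm.2).1⟩
        rw [h1 i (Finset.mem_filter.mp hi).1] at this
        exact notMem_empty y this
      · intro i hi j hj hij
        obtain ⟨hi', hxi⟩ := Finset.mem_filter.mp hi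
        obtain ⟨hj', _⟩ := Finset.mem_filter.mp hj
        obtain ⟨y, hy⟩ := h2 i hi' j hj' hij
        have hm := mem_inter.mp hy
        refine ⟨y, mem_inter.mpr ⟨hm.1, mem_sdiff.mpr ⟨hm.2, ?_⟩⟩⟩
        simp only [mem_singleton]
        rintro rfl; exact hxi hm.1
      · have hsub : (s.filter (fun i => x ∉ A i)).biUnion
            (fun i => A i ∪ (B i \ {x})) ⊆ Y.erase x := by
          intro y hy
          obtain ⟨i, hi, hyi⟩ := mem_biUnion.mp hy
          obtain ⟨hi', hxi⟩ := Finset.mem_filter.mp hi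
          refine mem_erase.mpr ⟨?_, ?_⟩
          · rcases mem_union.mp hyi with h' | h'
            · rintro rfl; exact hxi h'
            · rintro rfl; exact (mem_sdiff.mp h').2 (mem_singleton.mpr rfl)
          · rcases mem_union.mp hyi with h' | h'
            · exact hYsub i hi' (mem_union_left _ h')
            · exact hYsub i hi' (mem_union_right _ (mem_sdiff.mp h').1)
        calc _ ≤ (Y.erase x).card := card_le_card hsub
          _ = N - 1 := by rw [card_erase_of_mem hx]
          _ ≤ n := by omega
    have main : ∑ i ∈ s, (N:ℝ) / (((A i).card + (B i).card).choose (A i).card) ≤ N := by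
      calc ∑ i ∈ s, (N:ℝ) / (((A i).card + (B i).card).choose (A i).card)
          = ∑ i ∈ s, ∑ x ∈ Y, (if x ∉ A i then
              (1:ℝ) / (((A i).card + ((B i) \ {x}).card).choose (A i).card) else 0) := by
            refine Finset.sum_congr rfl fun i hi => ?_
            rw [← fconv i hi, key i hi]
        _ = ∑ x ∈ Y, ∑ i ∈ s, (if x ∉ A i then
              (1:ℝ) / (((A i).card + ((B i) \ {x}).card).choose (A i).card) else 0) :=
            Finset.sum_comm
        _ = ∑ x ∈ Y, ∑ i ∈ s.filter (fun i => x ∉ A i),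
              (1:ℝ) / (((A i).card + ((B i) \ {x}).card).choose (A i).card) := by
            refine Finset.sum_congr rfl fun x _ => ?_
            rw [Finset.sum_filter]
        _ ≤ ∑ x ∈ Y, (1:ℝ) := Finset.sum_le_sum inner_le
        _ = N := by simp [hN]
    have hNpos : (0:ℝ) < N := by exact_mod_cast hYpos
    have : (N:ℝ) * ∑ i ∈ s, (1:ℝ) / (((A i).card + (B i).card).choose (A i).card) ≤ N * 1 := by
      rw [Finset.mul_sum, mul_one]
      convert main using 2 with i
      ring
    exact le_of_mul_le_mul_left this hNpos

theorem stmt_5 {α : Type*} [DecidableEq α] (t : ℕ)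
    (A B : Fin t → Finset α)
    (h : ∀ i j, A i ∩ B j = ∅ ↔ i = j) :
    ∑ j : Fin t, (1 : ℝ) / (Nat.choose ((A j).card + (B j).card) (A j).card) ≤ 1 := by
  apply boll A _ B Finset.univ
  · intro i _; exact (h i i).mpr rfl
  · intro i _ j _ hij
    rw [Finset.nonempty_iff_ne_empty]
    intro he
    exact hij ((h i j).mp he)
  · exact le_refl _
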